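/- For every nonnegative integers m, n, ℓ with n ≥ m and every real t with 0 ≤ t ≤ 1, one has P_ℓ^{(n,m)}(2t² − 1) = d_{n,m}(ℓ) · ∫_0^1 (1 − v²)^{m − 1/2} · C_{2ℓ}^{(n+m+1)}(vt) dv, where d_{n,m}(ℓ) = 2^{2m+1}·(ℓ+m)!·m!·(n+m)! / (π·(2m)!·(ℓ+n+m)!). -/

import Mathlib

open Real MeasureTheory

/-- Generalized binomial coefficient `C(a, j) = a(a-1)⋯(a-j+1)/j!`. -/
noncomputable def genBinom (a : ℝ) (j : ℕ) : ℝ :=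
  (∏ i ∈ Finset.range j, (a - i)) / (Nat.factorial j)

/-- Jacobi polynomial `P_ℓ^{(α,β)}(x)`. -/
noncomputable def jacobiP (α β : ℝ) (l : ℕ) (x : ℝ) : ℝ :=
  ∑ k ∈ Finset.range (l + 1),
    genBinom ((l : ℝ) + α) (l - k) * genBinom ((l : ℝ) + β) k *
      ((x - 1) / 2) ^ k * ((x + 1) / 2) ^ (l - k)

/-- Gegenbauer (ultraspherical) polynomial `C_m^{(λ)}(x)`. -/
noncomputable def gegenbauerC (m : ℕ) (lam : ℝ) (x : ℝ) : ℝ :=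
  ∑ k ∈ Finset.range (m / 2 + 1),
    (-1 : ℝ) ^ k *
      (Real.Gamma (lam + m - k) /
        (Real.Gamma lam * (Nat.factorial k) * (Nat.factorial (m - 2 * k)))) *
      (2 * x) ^ (m - 2 * k)

/-- Pochhammer symbol `(q)_k = q(q+1)⋯(q+k-1)`. -/
noncomputable def poch (q : ℝ) (k : ℕ) : ℝ := ∏ i ∈ Finset.range k, (q + i)

/-- Terminating Gauss hypergeometric function `₂F₁(-m, b; c; z)`. -/
noncomputable def hyp2F1 (m : ℕ) (b c z : ℝ) : ℝ :=
  ∑ k ∈ Finset.range (m + 1),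
    poch (-(m : ℝ)) k * poch b k / (poch c k * (Nat.factorial k)) * z ^ k

/-- The operator `(Df)(u) = -(1/sin u) f'(u)`. -/
noncomputable def Dop (f : ℝ → ℝ) : ℝ → ℝ := fun u => -(1 / Real.sin u) * deriv f u

/-! ### Auxiliary lemmas -/

lemma genBinom_nat (a j : ℕ) : genBinom (a : ℝ) j = a.choose j := by
  unfold genBinom
  rcases le_or_gt j a with h | h
  · have hp : (∏ i ∈ Finset.range j, ((a : ℝ) - i)) = (a.descFactorial j : ℝ) := by
      rw [Nat.descFactorial_eq_prod_range, Nat.cast_prod]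
      refine Finset.prod_congr rfl fun i hi => ?_
      rw [Nat.cast_sub (le_trans (Finset.mem_range.1 hi).le h)]
    rw [hp, Nat.descFactorial_eq_factorial_mul_choose, Nat.cast_mul]
    field_simp [Nat.factorial_ne_zero]
  · have hp : (∏ i ∈ Finset.range j, ((a : ℝ) - i)) = 0 := by
      refine Finset.prod_eq_zero (Finset.mem_range.2 h) ?_
      simp
    rw [hp, Nat.choose_eq_zero_of_lt h]
    simp

lemma vdm (a b q : ℕ) :
    ∑ j ∈ Finset.range (q + 1), a.choose j * b.choose (q - j) = (a + b).choose q := by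
  rw [Nat.add_choose_eq, Finset.Nat.sum_antidiagonal_eq_sum_range_succ_mk]

lemma choose_trans {a k s : ℕ} (hs : s ≤ k) (hk : k ≤ a) :
    a.choose k * k.choose s = a.choose s * (a - s).choose (k - s) := by
  have h1 : a.choose k * k.choose s * (s.factorial * (k - s).factorial * (a - k).factorial)
      = a.factorial := by
    calc a.choose k * k.choose s * (s.factorial * (k - s).factorial * (a - k).factorial)
        = a.choose k * (k.choose s * s.factorial * (k - s).factorial) * (a - k).factorial := by
          ring
      _ = a.choose k * k.factorial * (a - k).factorial := by
          rw [Nat.choose_mul_factorial_mul_factorial hs]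
      _ = a.factorial := Nat.choose_mul_factorial_mul_factorial hk
  have h2 : a.choose s * (a - s).choose (k - s) * (s.factorial * (k - s).factorial *
      (a - k).factorial) = a.factorial := by
    have hks : k - s ≤ a - s := by omega
    have h3 : a - s - (k - s) = a - k := by omega
    calc a.choose s * (a - s).choose (k - s) * (s.factorial * (k - s).factorial *
          (a - k).factorial)
        = a.choose s * ((a - s).choose (k - s) * (k - s).factorial * (a - s - (k - s)).factorial)
            * s.factorial := by rw [h3]; ring
      _ = a.choose s * (a - s).factorial * s.factorial := by
          rw [Nat.choose_mul_factorial_mul_factorial hks]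
      _ = a.choose s * s.factorial * (a - s).factorial := by ring
      _ = a.factorial := Nat.choose_mul_factorial_mul_factorial (hs.trans hk)
  have hpos : 0 < s.factorial * (k - s).factorial * (a - k).factorial :=
    Nat.pos_of_ne_zero (by positivity)
  exact Nat.eq_of_mul_eq_mul_right hpos (h1.trans h2.symm)

lemma comb (n m l s : ℕ) (hs : s ≤ l) :
    ∑ k ∈ Finset.range (l + 1), (l + n).choose (l - k) * ((l + m).choose k * k.choose s)
      = (l + m).choose s * ((l - s) + m + (l + n)).choose (l - s) := by
  set q := l - s with hq
  rw [Finset.range_eq_Ico, ← Finset.sum_Ico_consecutive _ (Nat.zero_le s) (by omega : s ≤ l + 1)]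
  have hzero : ∑ k ∈ Finset.Ico 0 s, (l + n).choose (l - k) * ((l + m).choose k * k.choose s)
      = 0 := by
    refine Finset.sum_eq_zero fun k hk => ?_
    have : k < s := (Finset.mem_Ico.1 hk).2
    rw [Nat.choose_eq_zero_of_lt this]
    ring
  rw [hzero, zero_add, Finset.sum_Ico_eq_sum_range]
  have hrange : l + 1 - s = q + 1 := by omega
  rw [hrange]
  have hterm : ∀ j ∈ Finset.range (q + 1),
      (l + n).choose (l - (s + j)) * ((l + m).choose (s + j) * (s + j).choose s)
        = (l + m).choose s * ((q + m).choose j * (l + n).choose (q - j)) := by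
    intro j hj
    have hj' : j ≤ q := by have := Finset.mem_range.1 hj; omega
    have h1 : (l + m).choose (s + j) * (s + j).choose s
        = (l + m).choose s * (q + m).choose j := by
      have := choose_trans (a := l + m) (k := s + j) (s := s)
        (Nat.le_add_right s j) (by omega)
      rw [this]
      congr 2
      · omega
      · omega
    have h2 : l - (s + j) = q - j := by omega
    rw [h2, h1]; ring
  rw [Finset.sum_congr rfl hterm, ← Finset.mul_sum, vdm]

lemma Gamma_half (q : ℕ) :
    Real.Gamma ((q : ℝ) + 1 / 2)
      = (Nat.factorial (2 * q) : ℝ) * Real.sqrt π / (4 ^ q * Nat.factorial q) := by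
  induction q with
  | zero =>
    rw [Nat.cast_zero, zero_add]
    norm_num [Real.Gamma_one_half_eq]
  | succ q ih =>
    have h1 : ((q + 1 : ℕ) : ℝ) + 1 / 2 = ((q : ℝ) + 1 / 2) + 1 := by push_cast; ring
    rw [h1, Real.Gamma_add_one (by positivity), ih]
    have h2 : 2 * (q + 1) = (2 * q + 1) + 1 := by omega
    rw [h2, Nat.factorial_succ, Nat.factorial_succ, Nat.factorial_succ]
    push_cast
    have h4 : (4 : ℝ) ^ q ≠ 0 := by positivity
    have hf : (Nat.factorial q : ℝ) ≠ 0 := Nat.cast_ne_zero.2 (Nat.factorial_ne_zero q)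
    field_simp
    ring

lemma Gamma_half_mul (q m : ℕ) :
    Real.Gamma ((q : ℝ) + 1 / 2) * Real.Gamma ((m : ℝ) + 1 / 2)
      = (Nat.factorial (2 * q) : ℝ) * (Nat.factorial (2 * m)) * π
          / (4 ^ (q + m) * Nat.factorial q * Nat.factorial m) := by
  rw [Gamma_half, Gamma_half, pow_add]
  have : Real.sqrt π * Real.sqrt π = π := Real.mul_self_sqrt pi_pos.le
  field_simp
  linear_combination this

lemma realBeta {a b : ℝ} (ha : 0 < a) (hb : 0 < b) :
    ∫ x in (0:ℝ)..1, x ^ (a - 1) * (1 - x) ^ (b - 1)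
      = Real.Gamma a * Real.Gamma b / Real.Gamma (a + b) := by
  have key : Complex.Gamma a * Complex.Gamma b
      = Complex.Gamma (a + b) * Complex.betaIntegral a b :=
    Complex.Gamma_mul_Gamma_eq_betaIntegral (by simpa using ha) (by simpa using hb)
  have hbeta : Complex.betaIntegral a b
      = ((∫ x in (0:ℝ)..1, x ^ (a - 1) * (1 - x) ^ (b - 1) : ℝ) : ℂ) := by
    rw [Complex.betaIntegral, ← intervalIntegral.integral_ofReal]
    refine intervalIntegral.integral_congr fun x hx => ?_
    rw [Set.uIcc_of_le (by norm_num : (0:ℝ) ≤ 1)] at hx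
    obtain ⟨hx0, hx1⟩ := hx
    rw [Complex.ofReal_mul, Complex.ofReal_cpow hx0,
      Complex.ofReal_cpow (by linarith : (0:ℝ) ≤ 1 - x)]
    push_cast
    ring
  rw [hbeta] at key
  have hG : Real.Gamma (a + b) ≠ 0 := (Real.Gamma_pos_of_pos (by linarith)).ne'
  have key2 : Real.Gamma a * Real.Gamma b
      = Real.Gamma (a + b) * ∫ x in (0:ℝ)..1, x ^ (a - 1) * (1 - x) ^ (b - 1) := by
    have h := key
    rw [Complex.Gamma_ofReal, Complex.Gamma_ofReal,
      show ((a : ℂ) + b) = ((a + b : ℝ) : ℂ) by push_cast; ring, Complex.Gamma_ofReal] at h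
    exact_mod_cast h
  field_simp at key2 ⊢
  linarith [key2]

lemma intble (e : ℝ) (he : -1 < e) (p : ℕ) :
    IntervalIntegrable (fun v : ℝ => (1 - v ^ 2) ^ e * v ^ p) volume 0 1 := by
  have h1 : IntervalIntegrable (fun x : ℝ => x ^ e) volume 0 1 :=
    intervalIntegral.intervalIntegrable_rpow' he
  have h2 : IntervalIntegrable (fun x : ℝ => (1 - x) ^ e) volume 0 1 := by
    have := (h1.comp_sub_left 1).symm
    simpa using this
  have hg : ContinuousOn (fun v : ℝ => (1 + v) ^ e * v ^ p) (Set.uIcc 0 1) := by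
    refine ContinuousOn.mul ?_ (continuousOn_pow p)
    refine ContinuousOn.rpow_const (by fun_prop) fun x hx => Or.inl ?_
    rw [Set.uIcc_of_le (by norm_num : (0:ℝ) ≤ 1)] at hx
    have := hx.1
    intro h; linarith
  have h3 := h2.continuousOn_mul hg
  rw [intervalIntegrable_iff_integrableOn_Ioc_of_le (by norm_num : (0:ℝ) ≤ 1)] at h3 ⊢
  refine h3.congr_fun (fun x hx => ?_) measurableSet_Ioc
  obtain ⟨hx0, hx1⟩ := hx
  have hfac : (1 : ℝ) - x ^ 2 = (1 + x) * (1 - x) := by ring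
  rw [hfac, Real.mul_rpow (by linarith) (by linarith)]
  ring

lemma sq_image_Ioo : (fun v : ℝ => v ^ 2) '' Set.Ioo 0 1 = Set.Ioo 0 1 := by
  ext u
  constructor
  · rintro ⟨v, ⟨hv0, hv1⟩, rfl⟩
    refine ⟨by positivity, ?_⟩
    show v ^ 2 < 1
    nlinarith
  · rintro ⟨hu0, hu1⟩
    exact ⟨Real.sqrt u, ⟨Real.sqrt_pos.2 hu0,
      by rw [show (1:ℝ) = Real.sqrt 1 by simp]; exact Real.sqrt_lt_sqrt hu0.le hu1⟩,
      Real.sq_sqrt hu0.le⟩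

lemma keyInt (m q : ℕ) :
    ∫ v in (0:ℝ)..1, (1 - v ^ 2) ^ ((m : ℝ) - 1 / 2) * v ^ (2 * q)
      = Real.Gamma ((q : ℝ) + 1 / 2) * Real.Gamma ((m : ℝ) + 1 / 2)
          / (2 * Real.Gamma ((q : ℝ) + 1 / 2 + ((m : ℝ) + 1 / 2))) := by
  have ha : (0:ℝ) < (q : ℝ) + 1 / 2 := by positivity
  have hb : (0:ℝ) < (m : ℝ) + 1 / 2 := by positivity
  have hderiv : ∀ v ∈ Set.Ioo (0:ℝ) 1,
      HasDerivWithinAt (fun v : ℝ => v ^ 2) (2 * v) (Set.Ioo 0 1) v := by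
    intro v _
    simpa using ((hasDerivAt_pow 2 v).hasDerivWithinAt)
  have hinj : Set.InjOn (fun v : ℝ => v ^ 2) (Set.Ioo 0 1) := by
    intro x hx y hy h
    simp only at h
    nlinarith [hx.1, hy.1]
  have hcv := MeasureTheory.integral_image_eq_integral_abs_deriv_smul
    measurableSet_Ioo hderiv hinj
    (fun u : ℝ => u ^ ((q : ℝ) + 1 / 2 - 1) * (1 - u) ^ ((m : ℝ) + 1 / 2 - 1))
  rw [sq_image_Ioo] at hcv
  have hcong : Set.EqOn
      (fun v : ℝ => |2 * v| • ((v ^ 2) ^ ((q : ℝ) + 1 / 2 - 1)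
        * (1 - v ^ 2) ^ ((m : ℝ) + 1 / 2 - 1)))
      (fun v : ℝ => 2 * ((1 - v ^ 2) ^ ((m : ℝ) - 1 / 2) * v ^ (2 * q)))
      (Set.Ioo 0 1) := by
    intro v hv
    obtain ⟨hv0, hv1⟩ := hv
    have h1 : |2 * v| = 2 * v := abs_of_pos (by linarith)
    have h2 : (v ^ 2 : ℝ) ^ ((q : ℝ) + 1 / 2 - 1) = v ^ (2 * (q : ℝ) - 1) := by
      rw [← Real.rpow_natCast v 2, ← Real.rpow_mul hv0.le]
      congr 1
      push_cast
      ring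
    have h3 : ((m : ℝ) + 1 / 2 - 1) = (m : ℝ) - 1 / 2 := by ring
    simp only [smul_eq_mul, h1, h2, h3]
    have h4 : v * v ^ (2 * (q : ℝ) - 1) = v ^ (2 * q : ℕ) := by
      rw [← Real.rpow_natCast v (2 * q)]
      nth_rewrite 1 [← Real.rpow_one v]
      rw [← Real.rpow_add hv0]
      congr 1
      push_cast
      ring
    rw [← h4]
    ring
  rw [MeasureTheory.setIntegral_congr_fun measurableSet_Ioo hcong] at hcv
  have hL : ∫ v in (0:ℝ)..1, (1 - v ^ 2) ^ ((m : ℝ) - 1 / 2) * v ^ (2 * q)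
      = ∫ v in Set.Ioo (0:ℝ) 1, (1 - v ^ 2) ^ ((m : ℝ) - 1 / 2) * v ^ (2 * q) := by
    rw [intervalIntegral.integral_of_le (by norm_num : (0:ℝ) ≤ 1),
      MeasureTheory.integral_Ioc_eq_integral_Ioo]
  have hR : ∫ u in Set.Ioo (0:ℝ) 1,
        u ^ ((q : ℝ) + 1 / 2 - 1) * (1 - u) ^ ((m : ℝ) + 1 / 2 - 1)
      = Real.Gamma ((q : ℝ) + 1 / 2) * Real.Gamma ((m : ℝ) + 1 / 2)
          / Real.Gamma ((q : ℝ) + 1 / 2 + ((m : ℝ) + 1 / 2)) := by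
    rw [← MeasureTheory.integral_Ioc_eq_integral_Ioo,
      ← intervalIntegral.integral_of_le (by norm_num : (0:ℝ) ≤ 1)]
    exact realBeta ha hb
  have hC : Real.Gamma ((q : ℝ) + 1 / 2 + ((m : ℝ) + 1 / 2)) ≠ 0 :=
    (Real.Gamma_pos_of_pos (by positivity)).ne'
  have hkey : (2:ℝ) * ∫ v in Set.Ioo (0:ℝ) 1, (1 - v ^ 2) ^ ((m : ℝ) - 1 / 2) * v ^ (2 * q)
      = Real.Gamma ((q : ℝ) + 1 / 2) * Real.Gamma ((m : ℝ) + 1 / 2)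
          / Real.Gamma ((q : ℝ) + 1 / 2 + ((m : ℝ) + 1 / 2)) := by
    rw [← MeasureTheory.integral_const_mul, ← hcv, hR]
  rw [hL]
  field_simp at hkey ⊢
  linarith

theorem statement_6 (m n l : ℕ) (hnm : m ≤ n) (t : ℝ) (ht1 : 0 ≤ t) (ht2 : t ≤ 1) :
    jacobiP (n : ℝ) (m : ℝ) l (2 * t ^ 2 - 1)
      = (2 ^ (2 * m + 1) * (Nat.factorial (l + m) : ℝ) * (Nat.factorial m : ℝ) *
            (Nat.factorial (n + m) : ℝ)) /
          (π * (Nat.factorial (2 * m) : ℝ) * (Nat.factorial (l + n + m) : ℝ)) *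
          ∫ v in (0 : ℝ)..1,
            (1 - v ^ 2) ^ ((m : ℝ) - 1 / 2) * gegenbauerC (2 * l) ((n : ℝ) + m + 1) (v * t) := by
  set lam : ℝ := (n : ℝ) + m + 1 with hlam
  set S : ℝ := ∑ s ∈ Finset.range (l + 1),
    (-1 : ℝ) ^ s * t ^ (2 * (l - s)) *
      (((l + m).choose s : ℝ) * (((l - s) + m + (l + n)).choose (l - s) : ℝ)) with hS
  -- Step 1: evaluate the integral
  have he : (-1 : ℝ) < (m : ℝ) - 1 / 2 := by
    have : (0:ℝ) ≤ m := Nat.cast_nonneg m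
    linarith
  have e1 : (∫ v in (0 : ℝ)..1,
        (1 - v ^ 2) ^ ((m : ℝ) - 1 / 2) * gegenbauerC (2 * l) lam (v * t))
      = ∑ k ∈ Finset.range (l + 1),
          ((-1 : ℝ) ^ k * (Real.Gamma (lam + (2 * l : ℕ) - k) /
              (Real.Gamma lam * (Nat.factorial k) * (Nat.factorial (2 * l - 2 * k)))) *
            (2 * t) ^ (2 * l - 2 * k)) *
          (Real.Gamma (((l - k : ℕ) : ℝ) + 1 / 2) * Real.Gamma ((m : ℝ) + 1 / 2)
            / (2 * Real.Gamma (((l - k : ℕ) : ℝ) + 1 / 2 + ((m : ℝ) + 1 / 2)))) := by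
    have hrw : ∀ v : ℝ, (1 - v ^ 2) ^ ((m : ℝ) - 1 / 2) * gegenbauerC (2 * l) lam (v * t)
        = ∑ k ∈ Finset.range (l + 1),
            (((-1 : ℝ) ^ k * (Real.Gamma (lam + (2 * l : ℕ) - k) /
                (Real.Gamma lam * (Nat.factorial k) * (Nat.factorial (2 * l - 2 * k)))) *
              (2 * t) ^ (2 * l - 2 * k)) *
            ((1 - v ^ 2) ^ ((m : ℝ) - 1 / 2) * v ^ (2 * l - 2 * k))) := by
      intro v
      unfold gegenbauerC
      rw [show 2 * l / 2 = l from by omega, Finset.mul_sum]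
      refine Finset.sum_congr rfl fun k hk => ?_
      have hmp : (2 * (v * t)) ^ (2 * l - 2 * k)
          = (2 * t) ^ (2 * l - 2 * k) * v ^ (2 * l - 2 * k) := by
        rw [show 2 * (v * t) = (2 * t) * v by ring, mul_pow]
      rw [hmp]
      ring
    rw [intervalIntegral.integral_congr fun v _ => hrw v,
      intervalIntegral.integral_finset_sum
        (fun k _ => ((intble _ he (2 * l - 2 * k)).const_mul _))]
    refine Finset.sum_congr rfl fun k hk => ?_
    have hk' : k ≤ l := by have := Finset.mem_range.1 hk; omega
    rw [intervalIntegral.integral_const_mul, show 2 * l - 2 * k = 2 * (l - k) from by omega,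
      keyInt]
  -- Step 2: the right-hand side equals S
  have hrhs : (2 ^ (2 * m + 1) * (Nat.factorial (l + m) : ℝ) * (Nat.factorial m : ℝ) *
          (Nat.factorial (n + m) : ℝ)) /
        (π * (Nat.factorial (2 * m) : ℝ) * (Nat.factorial (l + n + m) : ℝ)) *
        (∫ v in (0 : ℝ)..1,
          (1 - v ^ 2) ^ ((m : ℝ) - 1 / 2) * gegenbauerC (2 * l) lam (v * t)) = S := by
    rw [e1, Finset.mul_sum, hS]
    refine Finset.sum_congr rfl fun k hk => ?_
    have hk' : k ≤ l := by have := Finset.mem_range.1 hk; omega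
    set q : ℕ := l - k with hq
    -- rewrite the Gamma factors
    have hg1 : Real.Gamma (lam + (2 * l : ℕ) - k) = (Nat.factorial (q + m + (l + n)) : ℝ) := by
      rw [show lam + ((2 * l : ℕ) : ℝ) - k = ((q + m + (l + n) : ℕ) : ℝ) + 1 from by
        rw [hlam, hq]; push_cast [Nat.cast_sub hk']; ring]
      exact Real.Gamma_nat_eq_factorial _
    have hg2 : Real.Gamma lam = (Nat.factorial (n + m) : ℝ) := by
      rw [show lam = ((n + m : ℕ) : ℝ) + 1 from by rw [hlam]; push_cast; ring]
      exact Real.Gamma_nat_eq_factorial _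
    have hg3 : Real.Gamma (((q : ℕ) : ℝ) + 1 / 2 + ((m : ℝ) + 1 / 2))
        = (Nat.factorial (q + m) : ℝ) := by
      rw [show ((q : ℕ) : ℝ) + 1 / 2 + ((m : ℝ) + 1 / 2) = ((q + m : ℕ) : ℝ) + 1 from by
        push_cast; ring]
      exact Real.Gamma_nat_eq_factorial _
    rw [hg1, hg2, hg3, Gamma_half_mul q m]
    -- rewrite binomial coefficients as factorials
    have hc1 : (((l + m).choose k) : ℝ)
        = (Nat.factorial (l + m) : ℝ) / (Nat.factorial k * Nat.factorial (q + m)) := by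
      rw [Nat.cast_choose ℝ (show k ≤ l + m by omega), show l + m - k = q + m from by omega]
    have hc2 : (((q + m + (l + n)).choose q) : ℝ)
        = (Nat.factorial (q + m + (l + n)) : ℝ)
            / (Nat.factorial q * Nat.factorial (l + n + m)) := by
      rw [Nat.cast_choose ℝ (show q ≤ q + m + (l + n) by omega),
        show q + m + (l + n) - q = l + n + m from by omega]
    rw [hc1, hc2]
    -- now pure field arithmetic
    have h2q : 2 * l - 2 * k = 2 * q := by omega
    rw [h2q]
    have hp4 : (4 : ℝ) ^ (q + m) = 2 ^ (2 * q) * 2 ^ (2 * m) := by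
      rw [show (4:ℝ) = 2 ^ 2 by norm_num, ← pow_mul, show 2 * (q + m) = 2 * q + 2 * m from by
        ring, pow_add]
    have hp2 : (2 * t) ^ (2 * q) = 2 ^ (2 * q) * t ^ (2 * q) := mul_pow 2 t (2 * q)
    rw [hp4, hp2, pow_succ]
    have f1 : (Nat.factorial (l + m) : ℝ) ≠ 0 := Nat.cast_ne_zero.2 (Nat.factorial_ne_zero _)
    have f2 : (Nat.factorial m : ℝ) ≠ 0 := Nat.cast_ne_zero.2 (Nat.factorial_ne_zero _)
    have f3 : (Nat.factorial (n + m) : ℝ) ≠ 0 := Nat.cast_ne_zero.2 (Nat.factorial_ne_zero _)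
    have f4 : (Nat.factorial (2 * m) : ℝ) ≠ 0 := Nat.cast_ne_zero.2 (Nat.factorial_ne_zero _)
    have f5 : (Nat.factorial (l + n + m) : ℝ) ≠ 0 := Nat.cast_ne_zero.2 (Nat.factorial_ne_zero _)
    have f6 : (Nat.factorial k : ℝ) ≠ 0 := Nat.cast_ne_zero.2 (Nat.factorial_ne_zero _)
    have f7 : (Nat.factorial (2 * q) : ℝ) ≠ 0 := Nat.cast_ne_zero.2 (Nat.factorial_ne_zero _)
    have f8 : (Nat.factorial q : ℝ) ≠ 0 := Nat.cast_ne_zero.2 (Nat.factorial_ne_zero _)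
    have f9 : (Nat.factorial (q + m) : ℝ) ≠ 0 := Nat.cast_ne_zero.2 (Nat.factorial_ne_zero _)
    have fpi : (π : ℝ) ≠ 0 := pi_ne_zero
    have fp1 : (2 : ℝ) ^ (2 * q) ≠ 0 := by positivity
    have fp2 : (2 : ℝ) ^ (2 * m) ≠ 0 := by positivity
    field_simp
  -- Step 3: the left-hand side equals S
  have hlhs : jacobiP (n : ℝ) (m : ℝ) l (2 * t ^ 2 - 1) = S := by
    unfold jacobiP
    have step1 : ∀ k ∈ Finset.range (l + 1),
        genBinom ((l : ℝ) + n) (l - k) * genBinom ((l : ℝ) + m) k *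
            ((2 * t ^ 2 - 1 - 1) / 2) ^ k * ((2 * t ^ 2 - 1 + 1) / 2) ^ (l - k)
          = ∑ s ∈ Finset.range (l + 1),
              (-1 : ℝ) ^ s * t ^ (2 * (l - s)) *
                (((l + n).choose (l - k) * ((l + m).choose k * k.choose s) : ℕ) : ℝ) := by
      intro k hk
      have hk' : k ≤ l := by have := Finset.mem_range.1 hk; omega
      have g1 : genBinom ((l : ℝ) + n) (l - k) = (((l + n).choose (l - k)) : ℝ) := by
        rw [show ((l : ℝ) + n) = ((l + n : ℕ) : ℝ) from by push_cast; ring, genBinom_nat]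
      have g2 : genBinom ((l : ℝ) + m) k = (((l + m).choose k) : ℝ) := by
        rw [show ((l : ℝ) + m) = ((l + m : ℕ) : ℝ) from by push_cast; ring, genBinom_nat]
      have hx1 : (2 * t ^ 2 - 1 - 1) / 2 = t ^ 2 + (-1) := by ring
      have hx2 : (2 * t ^ 2 - 1 + 1) / 2 = t ^ 2 := by ring
      rw [g1, g2, hx1, hx2, add_pow, Finset.mul_sum, Finset.sum_mul,
        ← Finset.sum_range_reflect]
      -- now both sides are sums; extend the left sum from range (k+1) to range (l+1)
      have hsub : Finset.range (k + 1) ⊆ Finset.range (l + 1) :=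
        Finset.range_subset_range.2 (by omega)
      rw [show (∑ s ∈ Finset.range (l + 1),
          (-1 : ℝ) ^ s * t ^ (2 * (l - s)) *
            (((l + n).choose (l - k) * ((l + m).choose k * k.choose s) : ℕ) : ℝ))
          = ∑ s ∈ Finset.range (k + 1),
            (-1 : ℝ) ^ s * t ^ (2 * (l - s)) *
              (((l + n).choose (l - k) * ((l + m).choose k * k.choose s) : ℕ) : ℝ) from by
        refine (Finset.sum_subset hsub fun s _ hs => ?_).symm
        have hks : k < s := by
          by_contra h
          exact hs (Finset.mem_range.2 (by omega))
        rw [Nat.choose_eq_zero_of_lt hks]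
        simp]
      refine Finset.sum_congr rfl fun s hs => ?_
      have hs' : s ≤ k := by have := Finset.mem_range.1 hs; omega
      simp only [Nat.add_sub_cancel]
      have e1' : k - (k - s) = s := by omega
      have ep : ((t ^ 2 : ℝ)) ^ (k - s) * (t ^ 2) ^ (l - k) = t ^ (2 * (l - s)) := by
        rw [← pow_mul, ← pow_mul, ← pow_add]
        congr 1
        omega
      rw [e1', Nat.choose_symm hs']
      push_cast
      linear_combination ((((l + n).choose (l - k) : ℝ)) * (((l + m).choose k : ℝ)) *
        ((k.choose s : ℝ)) * (-1 : ℝ) ^ s) * ep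
    rw [Finset.sum_congr rfl step1, Finset.sum_comm, hS]
    refine Finset.sum_congr rfl fun s hs => ?_
    have hs' : s ≤ l := by have := Finset.mem_range.1 hs; omega
    rw [show (∑ k ∈ Finset.range (l + 1),
        (-1 : ℝ) ^ s * t ^ (2 * (l - s)) *
          (((l + n).choose (l - k) * ((l + m).choose k * k.choose s) : ℕ) : ℝ))
        = (-1 : ℝ) ^ s * t ^ (2 * (l - s)) *
          ((∑ k ∈ Finset.range (l + 1),
            (l + n).choose (l - k) * ((l + m).choose k * k.choose s) : ℕ) : ℝ) from by
      rw [Nat.cast_sum, Finset.mul_sum]]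
    rw [comb n m l s hs']
    push_cast
    ring
  rw [hlhs, ← hrhs]
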